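/- For real α ≥ 2, define α₀ as the largest real root of z^7 + 42z^6 + 684z^5 + 4038z^4 + 13119z^3 + 12048z^2 - 100204z - 59328. Then the inequality p_α(5)² ≥ p_α(4)·p_α(6) fails for 2 ≤ α < α₀ and holds for α ≥ α₀, where p_α(n) are the coefficients of ∏_{m≥1}(1-q^m)^{-α} (polynomials in α given explicitly for n = 4, 5, 6). -/

import Mathlib

/-- The fractional partition function `p_α(n)`, the coefficient of `q^n` in
`∏_{m≥1}(1-q^m)^{-α}`, defined via the recursion
`p_α(n) = (α/n) ∑_{ℓ=1}^n σ(ℓ) p_α(n-ℓ)` with `p_α(0) = 1`. -/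
noncomputable def fracPartition (α : ℝ) : ℕ → ℝ
  | 0 => 1
  | n + 1 =>
    α / (n + 1) * ∑ ℓ ∈ (Finset.Icc 1 (n + 1)).attach,
      (∑ d ∈ Nat.divisors ℓ.1, (d : ℝ)) * fracPartition α (n + 1 - ℓ.1)
  decreasing_by
    have := (Finset.mem_Icc.mp ℓ.2).1; omega

lemma fp_succ (α : ℝ) (n : ℕ) : fracPartition α (n+1)
    = α / (n + 1) * ∑ ℓ ∈ Finset.Icc 1 (n + 1),
      (∑ d ∈ Nat.divisors ℓ, (d : ℝ)) * fracPartition α (n + 1 - ℓ) := by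
  rw [fracPartition,
    Finset.sum_attach _ (fun ℓ => (∑ d ∈ Nat.divisors ℓ, (d : ℝ)) * fracPartition α (n + 1 - ℓ))]

lemma sig1 : (∑ d ∈ Nat.divisors 1, (d:ℝ)) = 1 := by
  rw [show Nat.divisors 1 = {1} from by decide]; norm_num
lemma sig2 : (∑ d ∈ Nat.divisors 2, (d:ℝ)) = 3 := by
  rw [show Nat.divisors 2 = {1,2} from by decide]; norm_num
lemma sig3 : (∑ d ∈ Nat.divisors 3, (d:ℝ)) = 4 := by
  rw [show Nat.divisors 3 = {1,3} from by decide]; norm_num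
lemma sig4 : (∑ d ∈ Nat.divisors 4, (d:ℝ)) = 7 := by
  rw [show Nat.divisors 4 = {1,2,4} from by decide]; norm_num
lemma sig5 : (∑ d ∈ Nat.divisors 5, (d:ℝ)) = 6 := by
  rw [show Nat.divisors 5 = {1,5} from by decide]; norm_num
lemma sig6 : (∑ d ∈ Nat.divisors 6, (d:ℝ)) = 12 := by
  rw [show Nat.divisors 6 = {1,2,3,6} from by decide]; norm_num

lemma fp0 (α : ℝ) : fracPartition α 0 = 1 := by rw [fracPartition]

lemma fp1 (α : ℝ) : fracPartition α 1 = α := by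
  rw [show (1:ℕ) = 0+1 from rfl, fp_succ,
    show Finset.Icc 1 (0+1) = {1} from rfl, Finset.sum_singleton]
  norm_num [sig1, fp0]

lemma fp2 (α : ℝ) : fracPartition α 2 = α*(α+3)/2 := by
  rw [show fracPartition α 2 = fracPartition α (1+1) from rfl, fp_succ,
    show Finset.Icc 1 (1+1) = {1,2} from rfl]
  rw [Finset.sum_insert (by decide), Finset.sum_singleton]
  norm_num [sig1, sig2, fp0, fp1]; ring

lemma fp3 (α : ℝ) : fracPartition α 3 = α*(α^2+9*α+8)/6 := by
  rw [show fracPartition α 3 = fracPartition α (2+1) from rfl, fp_succ,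
    show Finset.Icc 1 (2+1) = {1,2,3} from rfl]
  rw [Finset.sum_insert (by decide), Finset.sum_insert (by decide), Finset.sum_singleton]
  norm_num [sig1, sig2, sig3, fp0, fp1, fp2]; ring

lemma fp4 (α : ℝ) : fracPartition α 4 = α*(α^3+18*α^2+59*α+42)/24 := by
  rw [show fracPartition α 4 = fracPartition α (3+1) from rfl, fp_succ,
    show Finset.Icc 1 (3+1) = {1,2,3,4} from rfl]
  rw [Finset.sum_insert (by decide), Finset.sum_insert (by decide),
    Finset.sum_insert (by decide), Finset.sum_singleton]
  norm_num [sig1, sig2, sig3, sig4, fp0, fp1, fp2, fp3]; ring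

lemma fp5 (α : ℝ) : fracPartition α 5 = α*(α^4+30*α^3+215*α^2+450*α+144)/120 := by
  rw [show fracPartition α 5 = fracPartition α (4+1) from rfl, fp_succ,
    show Finset.Icc 1 (4+1) = {1,2,3,4,5} from rfl]
  rw [Finset.sum_insert (by decide), Finset.sum_insert (by decide),
    Finset.sum_insert (by decide), Finset.sum_insert (by decide), Finset.sum_singleton]
  norm_num [sig1, sig2, sig3, sig4, sig5, fp0, fp1, fp2, fp3, fp4]; ring

lemma fp6 (α : ℝ) : fracPartition α 6
    = α*(α^5+45*α^4+565*α^3+2475*α^2+3394*α+1440)/720 := by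
  rw [show fracPartition α 6 = fracPartition α (5+1) from rfl, fp_succ,
    show Finset.Icc 1 (5+1) = {1,2,3,4,5,6} from rfl]
  rw [Finset.sum_insert (by decide), Finset.sum_insert (by decide),
    Finset.sum_insert (by decide), Finset.sum_insert (by decide),
    Finset.sum_insert (by decide), Finset.sum_singleton]
  norm_num [sig1, sig2, sig3, sig4, sig5, sig6, fp0, fp1, fp2, fp3, fp4, fp5]; ring

/-- Strict monotonicity of the degree-7 polynomial on `[2, ∞)` in quantitative form. -/
lemma Pdiff (a b : ℝ) (hb : 2 ≤ b) (hba : b ≤ a) :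
    297864 * (a - b) ≤
      (a ^ 7 + 42 * a ^ 6 + 684 * a ^ 5 + 4038 * a ^ 4 + 13119 * a ^ 3 + 12048 * a ^ 2
          - 100204 * a - 59328)
      - (b ^ 7 + 42 * b ^ 6 + 684 * b ^ 5 + 4038 * b ^ 4 + 13119 * b ^ 3 + 12048 * b ^ 2
          - 100204 * b - 59328) := by
  have hc : (0:ℝ) ≤ a - b := by linarith
  have hd : (0:ℝ) ≤ b - 2 := by linarith
  nlinarith [mul_nonneg (pow_nonneg hc 1) (pow_nonneg hd 1),
    mul_nonneg (pow_nonneg hc 1) (pow_nonneg hd 2),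
    mul_nonneg (pow_nonneg hc 1) (pow_nonneg hd 3),
    mul_nonneg (pow_nonneg hc 1) (pow_nonneg hd 4),
    mul_nonneg (pow_nonneg hc 1) (pow_nonneg hd 5),
    mul_nonneg (pow_nonneg hc 1) (pow_nonneg hd 6),
    mul_nonneg (pow_nonneg hc 2) (pow_nonneg hd 0),
    mul_nonneg (pow_nonneg hc 2) (pow_nonneg hd 1),
    mul_nonneg (pow_nonneg hc 2) (pow_nonneg hd 2),
    mul_nonneg (pow_nonneg hc 2) (pow_nonneg hd 3),
    mul_nonneg (pow_nonneg hc 2) (pow_nonneg hd 4),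
    mul_nonneg (pow_nonneg hc 2) (pow_nonneg hd 5),
    mul_nonneg (pow_nonneg hc 3) (pow_nonneg hd 0),
    mul_nonneg (pow_nonneg hc 3) (pow_nonneg hd 1),
    mul_nonneg (pow_nonneg hc 3) (pow_nonneg hd 2),
    mul_nonneg (pow_nonneg hc 3) (pow_nonneg hd 3),
    mul_nonneg (pow_nonneg hc 3) (pow_nonneg hd 4),
    mul_nonneg (pow_nonneg hc 4) (pow_nonneg hd 0),
    mul_nonneg (pow_nonneg hc 4) (pow_nonneg hd 1),
    mul_nonneg (pow_nonneg hc 4) (pow_nonneg hd 2),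
    mul_nonneg (pow_nonneg hc 4) (pow_nonneg hd 3),
    mul_nonneg (pow_nonneg hc 5) (pow_nonneg hd 0),
    mul_nonneg (pow_nonneg hc 5) (pow_nonneg hd 1),
    mul_nonneg (pow_nonneg hc 5) (pow_nonneg hd 2),
    mul_nonneg (pow_nonneg hc 6) (pow_nonneg hd 0),
    mul_nonneg (pow_nonneg hc 6) (pow_nonneg hd 1),
    mul_nonneg (pow_nonneg hc 7) (pow_nonneg hd 0)]

theorem heim_neuhauser_exception (α₀ : ℝ)
    (hroot : α₀ ^ 7 + 42 * α₀ ^ 6 + 684 * α₀ ^ 5 + 4038 * α₀ ^ 4 + 13119 * α₀ ^ 3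
        + 12048 * α₀ ^ 2 - 100204 * α₀ - 59328 = 0)
    (hmax : ∀ z : ℝ, z ^ 7 + 42 * z ^ 6 + 684 * z ^ 5 + 4038 * z ^ 4 + 13119 * z ^ 3
        + 12048 * z ^ 2 - 100204 * z - 59328 = 0 → z ≤ α₀) :
    ∀ α : ℝ, 2 ≤ α →
      (fracPartition α 4 * fracPartition α 6 ≤ fracPartition α 5 ^ 2 ↔ α₀ ≤ α) := by
  -- `α₀ ≥ 2`, by the intermediate value theorem applied on `[2, 10]`.
  have hα₀2 : 2 ≤ α₀ := by
    have hcont : ContinuousOn (fun z : ℝ => z ^ 7 + 42 * z ^ 6 + 684 * z ^ 5 + 4038 * z ^ 4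
        + 13119 * z ^ 3 + 12048 * z ^ 2 - 100204 * z - 59328) (Set.Icc 2 10) := by
      fun_prop
    have hmem : (0:ℝ) ∈ Set.Icc ((fun z : ℝ => z ^ 7 + 42 * z ^ 6 + 684 * z ^ 5 + 4038 * z ^ 4
        + 13119 * z ^ 3 + 12048 * z ^ 2 - 100204 * z - 59328) 2)
        ((fun z : ℝ => z ^ 7 + 42 * z ^ 6 + 684 * z ^ 5 + 4038 * z ^ 4
        + 13119 * z ^ 3 + 12048 * z ^ 2 - 100204 * z - 59328) 10) := by
      constructor <;> norm_num
    obtain ⟨c, hc, hfc⟩ := intermediate_value_Icc (by norm_num : (2:ℝ) ≤ 10) hcont hmem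
    exact le_trans hc.1 (hmax c hfc)
  intro α hα
  -- The key algebraic identity.
  have hid : fracPartition α 5 ^ 2 - fracPartition α 4 * fracPartition α 6
      = α ^ 2 * (α + 3) * (α ^ 7 + 42 * α ^ 6 + 684 * α ^ 5 + 4038 * α ^ 4 + 13119 * α ^ 3
          + 12048 * α ^ 2 - 100204 * α - 59328) / 86400 := by
    rw [fp4, fp5, fp6]; ring
  have hfac : (0:ℝ) < α ^ 2 * (α + 3) := by nlinarith
  constructor
  · intro h
    by_contra hlt
    push_neg at hlt
    have hdiff := Pdiff α₀ α hα hlt.le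
    have hPneg : α ^ 7 + 42 * α ^ 6 + 684 * α ^ 5 + 4038 * α ^ 4 + 13119 * α ^ 3
        + 12048 * α ^ 2 - 100204 * α - 59328 < 0 := by nlinarith
    nlinarith [mul_neg_of_pos_of_neg hfac hPneg]
  · intro h
    have hdiff := Pdiff α α₀ hα₀2 h
    have hPnn : 0 ≤ α ^ 7 + 42 * α ^ 6 + 684 * α ^ 5 + 4038 * α ^ 4 + 13119 * α ^ 3
        + 12048 * α ^ 2 - 100204 * α - 59328 := by nlinarith
    nlinarith [mul_nonneg hfac.le hPnn]
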